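/- For every ε with 0 < ε < 1, there exist three points a, b, c ∈ ℝ² with ‖a − b‖ = 1, ‖(a+b)/2 − c‖ = ε, and ‖a − c‖ ≤ 2 and ‖b − c‖ ≤ 2. Hence after merging a and b (a merge within a factor 2 of optimal), the minimum pairwise distance among remaining centroids can be made arbitrarily small. -/

import Mathlib

theorem approx_centroid_merge_distance_arbitrarily_small :
    ∀ ε : ℝ, 0 < ε → ε < 1 →
      ∃ a b c : EuclideanSpace ℝ (Fin 2),
        ‖a - b‖ = 1 ∧ ‖(2 : ℝ)⁻¹ • (a + b) - c‖ = ε ∧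
        ‖a - c‖ ≤ 2 ∧ ‖b - c‖ ≤ 2 := by
  intro ε hε hε1
  refine ⟨WithLp.toLp 2 (![0, 0] : Fin 2 → ℝ), WithLp.toLp 2 (![1, 0] : Fin 2 → ℝ), WithLp.toLp 2 (![1/2, ε] : Fin 2 → ℝ), ?_, ?_, ?_, ?_⟩
  · rw [EuclideanSpace.norm_eq]
    simp [Fin.sum_univ_two]
  · rw [EuclideanSpace.norm_eq]
    have : ((2:ℝ)⁻¹ • (WithLp.toLp 2 (![0, 0] : Fin 2 → ℝ) + WithLp.toLp 2 ![1, 0]) - WithLp.toLp 2 ![1/2, ε] : EuclideanSpace ℝ (Fin 2)) = WithLp.toLp 2 ![0, -ε] := by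
      ext i
      fin_cases i <;> simp
    rw [this]
    simp [Fin.sum_univ_two]
    rw [Real.sqrt_sq hε.le]
  · rw [EuclideanSpace.norm_eq]
    have h : Real.sqrt (∑ i, ‖(WithLp.toLp 2 (![0,0] : Fin 2 → ℝ) - WithLp.toLp 2 ![1/2, ε] : EuclideanSpace ℝ (Fin 2)) i‖ ^ 2) = Real.sqrt (1/4 + ε^2) := by
      congr 1
      simp [Fin.sum_univ_two]
      ring
    rw [h]
    have : (1/4 + ε^2 : ℝ) ≤ 4 := by nlinarith
    calc Real.sqrt (1/4 + ε^2) ≤ Real.sqrt 4 := Real.sqrt_le_sqrt this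
      _ = 2 := by rw [show (4:ℝ) = 2^2 by norm_num, Real.sqrt_sq]; norm_num
  · rw [EuclideanSpace.norm_eq]
    have h : Real.sqrt (∑ i, ‖(WithLp.toLp 2 (![1,0] : Fin 2 → ℝ) - WithLp.toLp 2 ![1/2, ε] : EuclideanSpace ℝ (Fin 2)) i‖ ^ 2) = Real.sqrt (1/4 + ε^2) := by
      congr 1
      simp [Fin.sum_univ_two]
      ring
    rw [h]
    have : (1/4 + ε^2 : ℝ) ≤ 4 := by nlinarith
    calc Real.sqrt (1/4 + ε^2) ≤ Real.sqrt 4 := Real.sqrt_le_sqrt this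
      _ = 2 := by rw [show (4:ℝ) = 2^2 by norm_num, Real.sqrt_sq]; norm_num
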